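/- Let R be the ring of integers of a finite unramified (more generally, with residue algebra a product of finite fields of characteristic 2) extension; concretely let R = ℤ₂[θ] where θ is a root of a monic f ∈ ℤ₂[x] with odd discriminant, so R/2R ≅ F₁ × ⋯ × F_m with each F_j a finite field of characteristic 2. For α ∈ R, the element 1 + 4α is a square in R if and only if Tr_{F_j/𝔽₂}(ᾱ_j) = 0 for all j, where ᾱ_j is the j-th component of the reduction of α mod 2. -/

import Mathlib

open Polynomial

lemma artin_schreier {F : Type} [Field F] [Fintype F] [Algebra (ZMod 2) F] (a : F) :
    Algebra.trace (ZMod 2) F a = 0 ↔ ∃ x : F, x ^ 2 + x = a := by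
  haveI : CharP F 2 := charP_of_injective_ringHom (algebraMap (ZMod 2) F).injective 2
  haveI : FiniteDimensional (ZMod 2) F := Module.Finite.of_finite
  haveI : Algebra.IsSeparable (ZMod 2) F := inferInstance
  have h2 : (2 : F) = 0 := CharTwo.two_eq_zero
  -- frobenius as an algebra equivalence
  let fr : F ≃ₐ[ZMod 2] F := AlgEquiv.ofRingEquiv (f := frobeniusEquiv F 2)
    (fun c => by
      rw [frobeniusEquiv_def, ← map_pow]
      congr 1
      revert c; decide)
  have htr2 : ∀ x : F, Algebra.trace (ZMod 2) F (x ^ 2) = Algebra.trace (ZMod 2) F x := by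
    intro x
    have := Algebra.trace_eq_of_algEquiv fr x
    simpa [fr, AlgEquiv.ofRingEquiv, frobeniusEquiv_def, frobenius_def] using this
  -- the Artin–Schreier additive homomorphism
  let ψ : F →+ F := AddMonoidHom.mk' (fun x => x ^ 2 + x) (by
    intro x y
    linear_combination x * y * h2)
  let τ : F →+ ZMod 2 := (Algebra.trace (ZMod 2) F).toAddMonoidHom
  have hψτ : ∀ x : F, τ (ψ x) = 0 := by
    intro x
    show Algebra.trace (ZMod 2) F (x ^ 2 + x) = 0
    rw [map_add, htr2]
    exact CharTwo.add_self_eq_zero _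
  have hle : ψ.range ≤ τ.ker := by
    rintro _ ⟨x, rfl⟩
    exact hψτ x
  -- trace is surjective
  obtain ⟨b, hb⟩ : ∃ b : F, Algebra.trace (ZMod 2) F b ≠ 0 := by
    by_contra h
    push_neg at h
    have := (traceForm_nondegenerate (ZMod 2) F).1 1 (fun n => by
      simp [Algebra.traceForm_apply, h])
    exact one_ne_zero this
  have hτsurj : τ.range = ⊤ := by
    rw [AddSubgroup.eq_top_iff']
    intro c
    have hb1 : τ b = 1 := by
      have : ∀ z : ZMod 2, z ≠ 0 → z = 1 := by decide
      exact this _ hb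
    rcases (by decide : ∀ z : ZMod 2, z = 0 ∨ z = 1) c with h | h
    · exact h ▸ zero_mem _
    · exact h ▸ ⟨b, hb1⟩
  -- kernel of ψ has two elements
  have hkψ : (ψ.ker : Set F) = {0, 1} := by
    ext x
    simp only [SetLike.mem_coe, AddMonoidHom.mem_ker, Set.mem_insert_iff,
      Set.mem_singleton_iff]
    show x ^ 2 + x = 0 ↔ _
    constructor
    · intro h
      have hx : x * (x + 1) = 0 := by linear_combination h
      rcases mul_eq_zero.mp hx with h' | h'
      · exact Or.inl h'
      · right; linear_combination h' - h2
    · rintro (rfl | rfl)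
      · simp
      · linear_combination h2
  have hcψ : Nat.card ψ.ker = 2 := by
    have : Nat.card ψ.ker = ((ψ.ker : Set F)).ncard := Nat.card_coe_set_eq _
    rw [this, hkψ, Set.ncard_pair (zero_ne_one)]
  have hcardψ : Nat.card ψ.range * 2 = Nat.card F := by
    have h1 := AddSubgroup.card_eq_card_quotient_mul_card_addSubgroup (ψ.ker)
    have hq : Nat.card (F ⧸ ψ.ker) = Nat.card ψ.range :=
      Nat.card_congr (QuotientAddGroup.quotientKerEquivRange ψ).toEquiv
    rw [h1, hq, hcψ]
  have hcardτ : Nat.card τ.ker * 2 = Nat.card F := by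
    have h1 := AddSubgroup.card_eq_card_quotient_mul_card_addSubgroup (τ.ker)
    have hq : Nat.card (F ⧸ τ.ker) = Nat.card τ.range :=
      Nat.card_congr (QuotientAddGroup.quotientKerEquivRange τ).toEquiv
    have h2' : Nat.card τ.range = 2 := by
      rw [hτsurj]
      rw [Nat.card_congr AddSubgroup.topEquiv.toEquiv]
      simp [Nat.card_eq_fintype_card]
    rw [h1, hq, h2']
    ring
  have heq : ψ.range = τ.ker := by
    apply SetLike.coe_injective
    apply Set.eq_of_subset_of_ncard_le (SetLike.coe_subset_coe.mpr hle) ?_ (Set.toFinite _)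
    have e1 : ((ψ.range : Set F)).ncard = Nat.card ψ.range := (Nat.card_coe_set_eq _).symm
    have e2 : ((τ.ker : Set F)).ncard = Nat.card τ.ker := (Nat.card_coe_set_eq _).symm
    rw [e1, e2]
    omega
  constructor
  · intro h
    have ha : a ∈ τ.ker := h
    rw [← heq] at ha
    obtain ⟨x, hx⟩ := ha
    exact ⟨x, hx⟩
  · rintro ⟨x, rfl⟩
    exact hψτ x


lemma coord_mem {f : Polynomial ℤ_[2]} (hf : f.Monic) (k : ℕ) (x : AdjoinRoot f) :
    x ∈ (Ideal.span ({2} : Set (AdjoinRoot f))) ^ k ↔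
      ∀ i, (2 : ℤ_[2]) ^ k ∣ (AdjoinRoot.powerBasis' hf).basis.equivFun x i := by
  set b := (AdjoinRoot.powerBasis' hf).basis
  have hsm : ∀ y : AdjoinRoot f, (2 : AdjoinRoot f) ^ k * y = ((2 : ℤ_[2]) ^ k) • y := by
    intro y
    rw [Algebra.smul_def, map_pow, map_ofNat]
  rw [Ideal.span_singleton_pow, Ideal.mem_span_singleton]
  constructor
  · rintro ⟨y, rfl⟩
    intro i
    rw [hsm, map_smul]
    exact ⟨b.equivFun y i, rfl⟩
  · intro h
    choose d hd using h
    refine ⟨b.equivFun.symm d, ?_⟩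
    rw [hsm, ← map_smul b.equivFun.symm]
    have : b.equivFun x = (2 : ℤ_[2]) ^ k • d := by
      ext i
      rw [Pi.smul_apply, smul_eq_mul, ← hd]
    rw [← this, LinearEquiv.symm_apply_apply]

lemma z2_adic : IsAdicComplete (Ideal.span {(2 : ℤ_[2])}) ℤ_[2] := by
  have : IsLocalRing.maximalIdeal ℤ_[2] = Ideal.span {(2 : ℤ_[2])} := by
    rw [PadicInt.maximalIdeal_eq_span_p]
    norm_num
  rw [← this]
  infer_instance

lemma smod_iff {R : Type*} [CommRing R] (I : Ideal R) (x y : R) (n : ℕ) :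
    x ≡ y [SMOD (I ^ n • ⊤ : Submodule R R)] ↔ x - y ∈ I ^ n := by
  rw [SModEq.sub_mem, smul_eq_mul, Ideal.mul_top]

lemma z2_smod_iff (x y : ℤ_[2]) (n : ℕ) :
    x ≡ y [SMOD ((Ideal.span {(2 : ℤ_[2])}) ^ n • ⊤ : Submodule ℤ_[2] ℤ_[2])] ↔
      (2 : ℤ_[2]) ^ n ∣ x - y := by
  rw [smod_iff, Ideal.span_singleton_pow, Ideal.mem_span_singleton]

lemma adjoin_adic {f : Polynomial ℤ_[2]} (hf : f.Monic) :
    IsAdicComplete (Ideal.span ({2} : Set (AdjoinRoot f))) (AdjoinRoot f) := by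
  set I : Ideal (AdjoinRoot f) := Ideal.span ({2} : Set (AdjoinRoot f)) with hI
  set b := (AdjoinRoot.powerBasis' hf).basis with hb
  haveI := z2_adic
  refine { toIsHausdorff := ⟨?_⟩, toIsPrecomplete := ⟨?_⟩ }
  · -- Hausdorff
    intro x hx
    have hcoord : ∀ i, b.equivFun x i = 0 := by
      intro i
      apply IsHausdorff.haus (IsAdicComplete.toIsHausdorff :
        IsHausdorff (Ideal.span {(2:ℤ_[2])}) ℤ_[2])
      intro n
      rw [z2_smod_iff, sub_zero]
      have hmem : x ∈ I ^ n := by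
        have := (smod_iff I x 0 n).mp (hx n)
        simpa using this
      exact (coord_mem hf n x).mp hmem i
    have : b.equivFun x = 0 := funext hcoord
    have := congrArg b.equivFun.symm this
    rwa [LinearEquiv.symm_apply_apply, map_zero] at this
  · -- Precomplete
    intro g hg
    have hcauchy : ∀ i, ∀ {m n : ℕ}, m ≤ n →
        (b.equivFun (g m) i) ≡ (b.equivFun (g n) i)
          [SMOD ((Ideal.span {(2:ℤ_[2])}) ^ m • ⊤ : Submodule ℤ_[2] ℤ_[2])] := by
      intro i m n hmn
      rw [z2_smod_iff]
      have hmem : g m - g n ∈ I ^ m := (smod_iff I _ _ m).mp (hg hmn)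
      have := (coord_mem hf m _).mp hmem i
      rwa [map_sub] at this
    have := fun i => IsPrecomplete.prec
      (IsAdicComplete.toIsPrecomplete : IsPrecomplete (Ideal.span {(2:ℤ_[2])}) ℤ_[2])
      (f := fun k => b.equivFun (g k) i) (fun {m n} h => hcauchy i h)
    choose L hL using this
    refine ⟨b.equivFun.symm L, ?_⟩
    intro n
    rw [smod_iff]
    rw [coord_mem hf n]
    intro i
    have := (z2_smod_iff _ _ n).mp (hL i n)
    rwa [map_sub, LinearEquiv.apply_symm_apply]

set_option maxHeartbeats 1000000 in
set_option synthInstance.maxHeartbeats 100000 in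
theorem stmt_9 (f : Polynomial ℤ_[2]) (hf : f.Monic)
    (hsep : (f.map (PadicInt.toZMod (p := 2))).Separable)
    (m : ℕ) (F : Fin m → Type) [∀ j, Field (F j)] [∀ j, Fintype (F j)]
    [∀ j, Algebra (ZMod 2) (F j)]
    (e : (AdjoinRoot f ⧸ (Ideal.span ({2} : Set (AdjoinRoot f)))) ≃+* ∀ j, F j)
    (α : AdjoinRoot f) :
    IsSquare (1 + 4 * α) ↔
      ∀ j, Algebra.trace (ZMod 2) (F j) (e (Ideal.Quotient.mk _ α) j) = 0 := by
  haveI := adjoin_adic hf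
  haveI : NoZeroSMulDivisors ℤ_[2] (AdjoinRoot f) :=
    ⟨fun h => (AdjoinRoot.powerBasis' hf).basis.smul_eq_zero.mp h⟩
  revert e
  generalize hJ : Ideal.span ({2} : Set (AdjoinRoot f)) = J
  intro e
  haveI : IsAdicComplete J (AdjoinRoot f) := hJ ▸ adjoin_adic hf
  have h2J : (2 : AdjoinRoot f) ∈ J := hJ ▸ Ideal.mem_span_singleton_self _
  have hq2 : Ideal.Quotient.mk J (2 : AdjoinRoot f) = 0 :=
    Ideal.Quotient.eq_zero_iff_mem.mpr h2J
  haveI hchar : ∀ j, CharP (F j) 2 := fun j =>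
    charP_of_injective_ringHom (algebraMap (ZMod 2) (F j)).injective 2
  constructor
  · rintro ⟨y, hy⟩
    have hQ : Ideal.Quotient.mk J y * Ideal.Quotient.mk J y = 1 := by
      have h1 : Ideal.Quotient.mk J (1 + 4 * α) = 1 := by
        have h42 : (1 : AdjoinRoot f) + 4 * α = 1 + 2 * (2 * α) := by ring
        rw [h42, map_add, map_mul, hq2, zero_mul, add_zero, map_one]
      rw [← map_mul, ← hy, h1]
    have hy1 : Ideal.Quotient.mk J y = 1 := by
      apply e.injective
      rw [map_one]
      funext j
      have htj : (e (Ideal.Quotient.mk J y) j) * (e (Ideal.Quotient.mk J y) j) = 1 := by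
        have := congrArg e hQ
        rw [map_mul, map_one] at this
        exact congrFun this j
      have h2j : (2 : F j) = 0 := CharTwo.two_eq_zero
      have h0 : (e (Ideal.Quotient.mk J y) j - 1) ^ 2 = 0 := by
        linear_combination htj + (1 - e (Ideal.Quotient.mk J y) j) * h2j
      have := sub_eq_zero.mp (pow_eq_zero_iff (two_ne_zero) |>.mp h0)
      simpa using this
    have hmem : y - 1 ∈ J := by
      rw [← Ideal.Quotient.eq_zero_iff_mem, map_sub, hy1, map_one, sub_self]
    obtain ⟨x, hx⟩ := Ideal.mem_span_singleton.mp (hJ ▸ hmem)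
    have hx' : y = 1 + 2 * x := by linear_combination hx
    have hcan : α = x ^ 2 + x := by
      have h40 : (4 : ℤ_[2]) • (α - (x ^ 2 + x)) = 0 := by
        have h4 : (4 : AdjoinRoot f) * (α - (x ^ 2 + x)) = 0 := by
          rw [hx'] at hy
          linear_combination hy
        rw [← h4, Algebra.smul_def, map_ofNat]
      have := (smul_eq_zero.mp h40).resolve_left (by norm_num)
      linear_combination this
    intro j
    apply (artin_schreier _).mpr
    refine ⟨e (Ideal.Quotient.mk J x) j, ?_⟩
    have hqα : Ideal.Quotient.mk J α
        = Ideal.Quotient.mk J x ^ 2 + Ideal.Quotient.mk J x := by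
      rw [hcan, map_add, map_pow]
    have h' := congrArg e hqα
    rw [map_add, map_pow] at h'
    have h'' := congrFun h' j
    rw [Pi.add_apply, Pi.pow_apply] at h''
    exact h''.symm
  · intro h
    have hAS : ∀ j, ∃ z : F j, z ^ 2 + z = e (Ideal.Quotient.mk J α) j :=
      fun j => (artin_schreier _).mp (h j)
    choose v hv using hAS
    obtain ⟨x₀, hx₀⟩ := Ideal.Quotient.mk_surjective (I := J) (e.symm v)
    have hroot : x₀ ^ 2 + x₀ - α ∈ J := by
      rw [← Ideal.Quotient.eq_zero_iff_mem, map_sub, map_add, map_pow, hx₀]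
      have hvα : e.symm v ^ 2 + e.symm v = Ideal.Quotient.mk J α := by
        apply e.injective
        rw [map_add, map_pow, RingEquiv.apply_symm_apply]
        funext j
        rw [Pi.add_apply, Pi.pow_apply]
        exact hv j
      rw [hvα, sub_self]
    have hmon : (X ^ 2 + X - C α : Polynomial (AdjoinRoot f)).Monic := by
      have hP2 : (X ^ 2 + X - C α : Polynomial (AdjoinRoot f))
          = X ^ (1 + 1) + (X - C α) := by ring
      rw [hP2]
      refine monic_X_pow_add (lt_of_le_of_lt
        (le_trans (degree_sub_le _ _)
          (max_le degree_X_le (le_trans degree_C_le (by norm_num)))) ?_)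
      norm_num
    have heval : (X ^ 2 + X - C α : Polynomial (AdjoinRoot f)).eval x₀ ∈ J := by
      have : (X ^ 2 + X - C α : Polynomial (AdjoinRoot f)).eval x₀ = x₀ ^ 2 + x₀ - α := by
        simp
      rwa [this]
    have hunit : IsUnit (Ideal.Quotient.mk J
        ((X ^ 2 + X - C α : Polynomial (AdjoinRoot f)).derivative.eval x₀)) := by
      have hd : (X ^ 2 + X - C α : Polynomial (AdjoinRoot f)).derivative.eval x₀
          = 2 * x₀ + 1 := by
        simp
        ring
      rw [hd, map_add, map_mul, hq2, zero_mul, map_one, zero_add]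
      exact isUnit_one
    obtain ⟨a, ha, -⟩ := HenselianRing.is_henselian
      (X ^ 2 + X - C α : Polynomial (AdjoinRoot f)) hmon x₀ heval hunit
    have ha' : a ^ 2 + a - α = 0 := by
      have h0 := ha
      simp only [Polynomial.IsRoot, eval_sub, eval_add, eval_pow, eval_X, eval_C] at h0
      exact h0
    exact ⟨1 + 2 * a, by linear_combination (-4 : AdjoinRoot f) * ha'⟩
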